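/- arXiv:2209.04368 — 2 statements merged into one kernel-verified Lean document; each statement's English description precedes it below -/
import Mathlib

section
/- Let (b_n) be a sequence in (1,∞) such that b_n/n is nondecreasing. If limsup_{n→∞} (n log log n)/b_n > 0, then the series ∑_{n≥1} 1/(b_n log b_n) diverges. -/
open MeasureTheory Filter Asymptotics Real Topology

/-- The Gauss measure on `(0,1]`, with density `1/(log 2 · (1+x))` w.r.t. Lebesgue measure. -/
noncomputable def gaussMeasure : Measure ℝ :=
  (volume.restrict (Set.Ioc (0:ℝ) 1)).withDensity
    (fun x => ENNReal.ofReal (1 / (Real.log 2 * (1 + x))))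

/-- The first continued fraction digit `a(x) = ⌊1/x⌋`. -/
noncomputable def cfDigit (x : ℝ) : ℕ := ⌊x⁻¹⌋₊

/-- The Gauss map `Sx = 1/x - ⌊1/x⌋`. -/
noncomputable def gaussMap (x : ℝ) : ℝ := Int.fract x⁻¹

/-- The prime digit function `a'(x)`: the first CF digit if it is prime, else `0`. -/
noncomputable def primeDigitVal (x : ℝ) : ℕ :=
  if (cfDigit x).Prime then cfDigit x else 0

private lemma step_ineq (k : ℕ) (hk : 2 ≤ k) :
    Real.log (Real.log ((k:ℝ)+1)) - Real.log (Real.log k) ≤ 1 / (k * Real.log k) := by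
  have hk2 : (2:ℝ) ≤ k := by exact_mod_cast hk
  have hkpos : (0:ℝ) < k := by linarith
  have hlk : 0 < Real.log k := Real.log_pos (by linarith)
  have hlk1 : 0 < Real.log ((k:ℝ)+1) := Real.log_pos (by linarith)
  have h1 : Real.log (Real.log ((k:ℝ)+1)) - Real.log (Real.log k)
      = Real.log (Real.log ((k:ℝ)+1) / Real.log k) := (Real.log_div hlk1.ne' hlk.ne').symm
  rw [h1]
  have h2 : Real.log (Real.log ((k:ℝ)+1) / Real.log k) ≤ Real.log ((k:ℝ)+1) / Real.log k - 1 :=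
    Real.log_le_sub_one_of_pos (by positivity)
  have h3 : Real.log ((k:ℝ)+1) - Real.log k ≤ 1 / k := by
    have he : Real.log ((k:ℝ)+1) - Real.log k = Real.log (((k:ℝ)+1)/k) :=
      (Real.log_div (by positivity) hkpos.ne').symm
    rw [he]
    have h5 := Real.log_le_sub_one_of_pos (show (0:ℝ) < ((k:ℝ)+1)/k by positivity)
    have heq : ((k:ℝ)+1)/k - 1 = 1/k := by field_simp; ring
    linarith [heq ▸ h5]
  have h4 : Real.log ((k:ℝ)+1) / Real.log k - 1
      = (Real.log ((k:ℝ)+1) - Real.log k) / Real.log k := by field_simp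
  have h6 : (Real.log ((k:ℝ)+1) - Real.log k) / Real.log k ≤ (1/k) / Real.log k := by gcongr
  have h7 : (1/(k:ℝ)) / Real.log k = 1 / (k * Real.log k) := by rw [div_div]
  linarith

private lemma telescope (M : ℕ) (hM : 2 ≤ M) : ∀ n, M ≤ n →
    Real.log (Real.log ((n:ℝ)+1)) - Real.log (Real.log ((M:ℝ)+1)) ≤
      ∑ k ∈ Finset.Ioc M n, 1 / ((k:ℝ) * Real.log k) := by
  intro n hn
  induction n, hn using Nat.le_induction with
  | base => simp
  | succ n hn ih =>
      rw [Finset.sum_Ioc_succ_top (by omega)]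
      have hs := step_ineq (n+1) (by omega)
      push_cast at hs ⊢
      linarith


set_option maxHeartbeats 1000000 in
theorem stmt_9 (b : ℕ → ℝ) (hb : ∀ n, 1 ≤ n → 1 < b n)
    (hmono : ∀ m n : ℕ, 1 ≤ m → m ≤ n → b m / m ≤ b n / n)
    (hsup : ∃ c : ℝ, 0 < c ∧ ∃ᶠ n : ℕ in atTop, c < (n:ℝ) * Real.log (Real.log n) / b n) :
    ¬ Summable (fun n : ℕ => 1 / (b n * Real.log (b n))) := by
  intro hsum
  obtain ⟨c, hc, hfreq⟩ := hsup
  set f : ℕ → ℝ := fun n => 1 / (b n * Real.log (b n)) with hf_def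
  set S : ℕ → ℝ := fun N => ∑ k ∈ Finset.range N, f k with hS_def
  have hcauchy : CauchySeq S := (hsum.hasSum.tendsto_sum_nat).cauchySeq
  obtain ⟨N, hN⟩ := Metric.cauchySeq_iff.mp hcauchy (c/8) (by positivity)
  set m₀ : ℕ := max N 1 with hm₀_def
  have hm₀1 : 1 ≤ m₀ := le_max_right _ _
  -- threshold
  set A₀ : ℝ := 32/c + 32*((m₀:ℝ)+4) + 1 with hA₀_def
  have hA₀pos : 0 < A₀ := by positivity
  set n₁ : ℕ := ⌈Real.exp (Real.exp A₀)⌉₊ with hn₁_def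
  obtain ⟨n, hn, hn₁⟩ := (hfreq.and_eventually (eventually_ge_atTop n₁)).exists
  -- basic facts about n
  have hnR : Real.exp (Real.exp A₀) ≤ (n:ℝ) := by
    calc Real.exp (Real.exp A₀) ≤ (n₁:ℝ) := Nat.le_ceil _
    _ ≤ n := by exact_mod_cast hn₁
  have hexpA₀ : 1 ≤ Real.exp A₀ := by
    have := Real.add_one_le_exp A₀; linarith
  have hn3 : (3:ℝ) ≤ n := by
    have h1 := Real.add_one_le_exp (Real.exp A₀)
    have h2 := Real.add_one_le_exp A₀
    have : A₀ ≥ 129 := by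
      have : (0:ℝ) < 32/c := by positivity
      have hm : (1:ℝ) ≤ m₀ := by exact_mod_cast hm₀1
      simp only [hA₀_def]; linarith
    linarith
  have hnpos : (0:ℝ) < n := by linarith
  have hlogn : 1 < Real.log n := by
    have : Real.exp A₀ ≤ Real.log n := by
      calc Real.exp A₀ = Real.log (Real.exp (Real.exp A₀)) := (Real.log_exp _).symm
      _ ≤ Real.log n := Real.log_le_log (Real.exp_pos _) hnR
    linarith [Real.add_one_le_exp A₀, hA₀pos]
  set A : ℝ := Real.log (Real.log n) with hA_def
  have hA₀A : A₀ ≤ A := by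
    have h1 : Real.exp A₀ ≤ Real.log n := by
      calc Real.exp A₀ = Real.log (Real.exp (Real.exp A₀)) := (Real.log_exp _).symm
      _ ≤ Real.log n := Real.log_le_log (Real.exp_pos _) hnR
    calc A₀ = Real.log (Real.exp A₀) := (Real.log_exp _).symm
    _ ≤ A := Real.log_le_log (Real.exp_pos _) h1
  have hApos : 0 < A := lt_of_lt_of_le hA₀pos hA₀A
  have hn1 : 1 ≤ n := by exact_mod_cast (by linarith : (1:ℝ) ≤ n)
  have hbn : 1 < b n := hb n hn1
  have hbnpos : 0 < b n := by linarith
  -- b n / n < A / c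
  have hbnA : b n / n < A / c := by
    rw [div_lt_div_iff₀ hnpos hc]
    have h1 : c * b n < (n:ℝ) * A := (lt_div_iff₀ hbnpos).mp hn
    linarith
  -- M
  set M : ℕ := m₀ + ⌈A/c⌉₊ + 2 with hM_def
  have hM2 : 2 ≤ M := by omega
  have hMm₀ : m₀ ≤ M := by omega
  have hAcM : A/c ≤ (M:ℝ) := by
    have h1 : A/c ≤ (⌈A/c⌉₊ : ℝ) := Nat.le_ceil _
    have h2 : (⌈A/c⌉₊ : ℝ) ≤ M := by exact_mod_cast (by omega : ⌈A/c⌉₊ ≤ M)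
    linarith
  -- M+1 ≤ exp(A/2)
  have hMexp : (M:ℝ) + 1 ≤ Real.exp (A/2) := by
    have hceil : (⌈A/c⌉₊ : ℝ) < A/c + 1 := Nat.ceil_lt_add_one (by positivity)
    have hMle : (M:ℝ) + 1 ≤ (m₀:ℝ) + A/c + 4 := by
      have : (M:ℝ) = (m₀:ℝ) + (⌈A/c⌉₊:ℝ) + 2 := by push_cast [hM_def]; ring
      linarith
    have hexp : (A/4 + 1)^2 ≤ Real.exp (A/2) := by
      have h1 : A/4 + 1 ≤ Real.exp (A/4) := by linarith [Real.add_one_le_exp (A/4)]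
      calc (A/4 + 1)^2 = (A/4+1)*(A/4+1) := sq (A/4+1)
      _ ≤ Real.exp (A/4) * Real.exp (A/4) :=
          mul_le_mul h1 h1 (by positivity) (Real.exp_pos _).le
      _ = Real.exp (A/2) := by rw [← Real.exp_add]; ring_nf
    have hAc32 : (32:ℝ) ≤ A * c := by
      have h32 : 32/c ≤ A := by simp only [hA₀_def] at hA₀A; nlinarith [hm₀1]
      calc (32:ℝ) = (32/c) * c := by field_simp
      _ ≤ A * c := by nlinarith
    have hAm : 32*((m₀:ℝ)+4) ≤ A := by
      have : (0:ℝ) < 32/c := by positivity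
      simp only [hA₀_def] at hA₀A; linarith
    have hA1 : (1:ℝ) ≤ A := by
      have : (0:ℝ) < 32/c := by positivity
      have hm : (1:ℝ) ≤ m₀ := by exact_mod_cast hm₀1
      simp only [hA₀_def] at hA₀A; linarith
    have h1 : A/c ≤ A^2/32 := by
      rw [div_le_div_iff₀ hc (by norm_num : (0:ℝ) < 32)]
      calc A * 32 ≤ A * (A*c) := mul_le_mul_of_nonneg_left hAc32 hApos.le
      _ = A^2 * c := by ring
    have h2 : (m₀:ℝ) + 4 ≤ A^2/32 := by
      have k1 : A * (32*((m₀:ℝ)+4)) ≤ A * A := mul_le_mul_of_nonneg_left hAm hApos.le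
      have hm4 : (0:ℝ) < (m₀:ℝ) + 4 := by positivity
      nlinarith [mul_le_mul_of_nonneg_left hA1 hm4.le]
    nlinarith
  -- M < n
  have hlognA : Real.exp A = Real.log n := Real.exp_log (by linarith)
  have hMn' : (M:ℝ) + 1 ≤ n := by
    have h1 : A/2 ≤ Real.log n := by
      rw [← hlognA]; have := Real.add_one_le_exp A; linarith
    calc (M:ℝ) + 1 ≤ Real.exp (A/2) := hMexp
    _ ≤ Real.exp (Real.log n) := Real.exp_le_exp.mpr h1
    _ = n := Real.exp_log hnpos
  have hMn : M < n := by
    have hcast : ((M:ℕ):ℝ) < (n:ℝ) := by linarith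
    exact_mod_cast hcast
  -- pointwise bound on Ioc M n
  have hpoint : ∀ k ∈ Finset.Ioc M n, c/(2*A) * (1/((k:ℝ) * Real.log k)) ≤ f k := by
    intro k hk
    obtain ⟨hkM, hkn⟩ := Finset.mem_Ioc.mp hk
    have hk3 : 3 ≤ k := by omega
    have hkR : (3:ℝ) ≤ k := by exact_mod_cast hk3
    have hkpos : (0:ℝ) < k := by linarith
    have hbk : 1 < b k := hb k (by omega)
    have hlogbk : 0 < Real.log (b k) := Real.log_pos hbk
    have hlogk : 0 < Real.log k := Real.log_pos (by linarith)
    have hkAc : A/c ≤ (k:ℝ) := hAcM.trans (by exact_mod_cast hkM.le)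
    have hAcpos : 0 < A/c := by positivity
    have hbk_ub : b k ≤ (k:ℝ) * (A/c) := by
      have h1 : b k / k ≤ b n / n := hmono k n (by omega) hkn
      have h2 : b k / k < A/c := lt_of_le_of_lt h1 hbnA
      calc b k = (b k / k) * k := by field_simp
      _ ≤ (A/c) * k := by nlinarith
      _ = (k:ℝ) * (A/c) := by ring
    have hlogbk_ub : Real.log (b k) ≤ 2 * Real.log k := by
      calc Real.log (b k) ≤ Real.log ((k:ℝ) * (A/c)) := Real.log_le_log (by linarith) hbk_ub
      _ = Real.log k + Real.log (A/c) := Real.log_mul hkpos.ne' hAcpos.ne'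
      _ ≤ Real.log k + Real.log k := by
          have := Real.log_le_log hAcpos hkAc; linarith
      _ = 2 * Real.log k := by ring
    have hprod : b k * Real.log (b k) ≤ ((k:ℝ) * (A/c)) * (2 * Real.log k) := by
      apply mul_le_mul hbk_ub hlogbk_ub hlogbk.le (by positivity)
    have hpos : 0 < b k * Real.log (b k) := by positivity
    have h1 : 1 / (((k:ℝ) * (A/c)) * (2 * Real.log k)) ≤ 1 / (b k * Real.log (b k)) :=
      one_div_le_one_div_of_le hpos hprod
    have h2 : c/(2*A) * (1/((k:ℝ) * Real.log k)) = 1 / (((k:ℝ) * (A/c)) * (2 * Real.log k)) := by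
      field_simp
    rw [h2]; exact h1
  -- sum lower bound
  have hsum1 : c/(2*A) * ∑ k ∈ Finset.Ioc M n, 1/((k:ℝ) * Real.log k)
      ≤ ∑ k ∈ Finset.Ioc M n, f k := by
    rw [Finset.mul_sum]
    exact Finset.sum_le_sum hpoint
  have htel := telescope M hM2 n hMn.le
  have hAn1 : A ≤ Real.log (Real.log ((n:ℝ)+1)) := by
    have h1 : Real.log n ≤ Real.log ((n:ℝ)+1) := Real.log_le_log hnpos (by linarith)
    exact Real.log_le_log (by linarith) h1
  have hM1half : Real.log (Real.log ((M:ℝ)+1)) ≤ A/2 := by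
    have hMpos : (0:ℝ) < (M:ℝ) + 1 := by positivity
    have h1 : Real.log ((M:ℝ)+1) ≤ (M:ℝ) + 1 := by
      have := Real.log_le_sub_one_of_pos hMpos; linarith
    have h2 : Real.log ((M:ℝ)+1) ≤ Real.exp (A/2) := h1.trans hMexp
    have h3 : 0 < Real.log ((M:ℝ)+1) := Real.log_pos (by
      have : (2:ℝ) ≤ M := by exact_mod_cast hM2
      linarith)
    calc Real.log (Real.log ((M:ℝ)+1)) ≤ Real.log (Real.exp (A/2)) := Real.log_le_log h3 h2
    _ = A/2 := Real.log_exp _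
  have hblock_lb : c/4 ≤ ∑ k ∈ Finset.Ioc M n, f k := by
    have h1 : A/2 ≤ Real.log (Real.log ((n:ℝ)+1)) - Real.log (Real.log ((M:ℝ)+1)) := by
      linarith
    have h2 : c/(2*A) * (A/2) ≤ c/(2*A) * ∑ k ∈ Finset.Ioc M n, 1/((k:ℝ) * Real.log k) := by
      apply mul_le_mul_of_nonneg_left (by linarith) (by positivity)
    have h3 : c/(2*A) * (A/2) = c/4 := by field_simp; ring
    linarith
  -- upper bound via Cauchy
  have hnN : m₀ ≤ n := hMm₀.trans hMn.le
  have hdist := hN (n+1) (by omega) (m₀+1) (by omega)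
  have hsum_eq : ∑ k ∈ Finset.Ioc m₀ n, f k = S (n+1) - S (m₀+1) := by
    rw [← Finset.Ico_add_one_add_one_eq_Ioc]
    exact Finset.sum_Ico_eq_sub f (by omega)
  have hsubset : ∑ k ∈ Finset.Ioc M n, f k ≤ ∑ k ∈ Finset.Ioc m₀ n, f k := by
    apply Finset.sum_le_sum_of_subset_of_nonneg (Finset.Ioc_subset_Ioc_left hMm₀)
    intro k hk _
    obtain ⟨hk1, _⟩ := Finset.mem_Ioc.mp hk
    have hbk : 1 < b k := hb k (by omega)
    have : 0 < Real.log (b k) := Real.log_pos hbk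
    positivity
  have habs : S (n+1) - S (m₀+1) ≤ |S (n+1) - S (m₀+1)| := le_abs_self _
  rw [Real.dist_eq] at hdist
  linarith
end

section
/- For Lebesgue-almost every x ∈ (0,1], the Cesàro averages of the prime digits diverge: lim_{n→∞} (1/n) ∑_{k=1}^n a_k'(x) = ∞. -/
open MeasureTheory Filter Asymptotics Real Topology

open scoped ENNReal NNReal

lemma measurable_cfDigit : Measurable cfDigit :=
  Nat.measurable_floor.comp measurable_inv

lemma measurable_gaussMap : Measurable gaussMap :=
  measurable_fract.comp measurable_inv

/-- one-variable change of variables for lintegral -/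
theorem lintegral_image_eq_lintegral_abs_deriv_mul' {s : Set ℝ} {f f' : ℝ → ℝ}
    (hs : MeasurableSet s) (hf' : ∀ x ∈ s, HasDerivWithinAt f (f' x) s x)
    (hf : Set.InjOn f s) (g : ℝ → ℝ≥0∞) :
    ∫⁻ x in f '' s, g x = ∫⁻ x in s, ENNReal.ofReal |f' x| * g (f x) := by
  simpa only [ContinuousLinearMap.det_toSpanSingleton] using
    lintegral_image_eq_lintegral_abs_det_fderiv_mul volume hs
      (fun x hx => (hf' x hx).hasFDerivWithinAt) hf g

lemma image_branch (j : ℕ) :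
    (fun y : ℝ => ((j:ℝ) + 1 + y)⁻¹) '' Set.Ioo 0 1
      = Set.Ioo (((j:ℝ) + 2)⁻¹) (((j:ℝ) + 1)⁻¹) := by
  ext x
  constructor
  · rintro ⟨y, ⟨hy0, hy1⟩, rfl⟩
    constructor
    · exact inv_strictAnti₀ (by positivity) (by linarith)
    · exact inv_strictAnti₀ (by positivity) (by linarith)
  · rintro ⟨h1, h2⟩
    have hx0 : (0:ℝ) < x := lt_trans (by positivity) h1
    have ha : ((j:ℝ) + 1) < x⁻¹ := by
      have := inv_strictAnti₀ hx0 h2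
      rwa [inv_inv] at this
    have hb : x⁻¹ < (j:ℝ) + 2 := by
      have := inv_strictAnti₀ (by positivity : (0:ℝ) < ((j:ℝ)+2)⁻¹) h1
      rwa [inv_inv] at this
    refine ⟨x⁻¹ - ((j:ℝ) + 1), ⟨by linarith, by linarith⟩, ?_⟩
    show ((j:ℝ) + 1 + (x⁻¹ - ((j:ℝ) + 1)))⁻¹ = x
    rw [show (j:ℝ) + 1 + (x⁻¹ - ((j:ℝ) + 1)) = x⁻¹ by ring, inv_inv]

lemma digit_branch (j : ℕ) {y : ℝ} (hy : y ∈ Set.Ioo (0:ℝ) 1) :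
    cfDigit (((j:ℝ) + 1 + y)⁻¹) = j + 1 ∧ gaussMap (((j:ℝ) + 1 + y)⁻¹) = y := by
  obtain ⟨hy0, hy1⟩ := hy
  have hpos : (0:ℝ) < (j:ℝ) + 1 + y := by positivity
  have hinv : (((j:ℝ) + 1 + y)⁻¹)⁻¹ = (j:ℝ) + 1 + y := inv_inv _
  constructor
  · rw [cfDigit, hinv, Nat.floor_eq_iff (by positivity)]
    push_cast
    constructor <;> linarith
  · rw [gaussMap, hinv, show (j:ℝ) + 1 + y = ((j:ℤ) + 1 : ℤ) + y by push_cast; ring,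
      Int.fract_intCast_add, Int.fract_eq_self.2 ⟨le_of_lt hy0, hy1⟩]

noncomputable def rho (p : ℕ) : ℝ := 1 - (1 - Real.exp (-1)) / (((p:ℝ) + 1) * ((p:ℝ) + 2))

lemma exp_neg_one_lt_one : Real.exp (-1) < 1 := Real.exp_lt_one_iff.2 (by norm_num)

lemma exp_neg_one_le_half : Real.exp (-1) ≤ 1/2 := by
  rw [Real.exp_neg]
  rw [inv_le_comm₀ (Real.exp_pos 1) (by norm_num)]
  have := Real.add_one_le_exp 1
  linarith

lemma rho_pos (p : ℕ) : 0 < rho p := by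
  have h1 : (1:ℝ) ≤ ((p:ℝ) + 1) * ((p:ℝ) + 2) := by nlinarith [Nat.cast_nonneg (α := ℝ) p]
  have h2 : (1 - Real.exp (-1)) / (((p:ℝ) + 1) * ((p:ℝ) + 2)) ≤ 1 - Real.exp (-1) := by
    apply div_le_self (by linarith [exp_neg_one_lt_one]) h1
  have := Real.exp_pos (-1)
  unfold rho; linarith

lemma rho_lt_one (p : ℕ) : rho p < 1 := by
  have h1 : (0:ℝ) < ((p:ℝ) + 1) * ((p:ℝ) + 2) := by positivity
  have : 0 < (1 - Real.exp (-1)) / (((p:ℝ) + 1) * ((p:ℝ) + 2)) :=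
    div_pos (by linarith [exp_neg_one_lt_one]) h1
  unfold rho; linarith

/-- telescoping sum -/
lemma hasSum_u (y : ℝ) (hy0 : 0 < y) :
    HasSum (fun j : ℕ => ((((j:ℝ) + 1 + y) * ((j:ℝ) + 2 + y))⁻¹)) ((1 + y)⁻¹) := by
  have hnn : ∀ j : ℕ, 0 ≤ (((j:ℝ) + 1 + y) * ((j:ℝ) + 2 + y))⁻¹ := fun j => by positivity
  rw [hasSum_iff_tendsto_nat_of_nonneg hnn]
  have hterm : ∀ j : ℕ, (((j:ℝ) + 1 + y) * ((j:ℝ) + 2 + y))⁻¹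
      = ((j:ℝ) + 1 + y)⁻¹ - (((j:ℕ)+1 : ℕ) + 1 + y)⁻¹ := by
    intro j
    have h1 : ((j:ℝ) + 1 + y) ≠ 0 := by positivity
    have h2 : ((j:ℝ) + 2 + y) ≠ 0 := by positivity
    push_cast
    rw [show (j:ℝ) + 1 + 1 + y = (j:ℝ) + 2 + y by ring,
      inv_sub_inv h1 h2, show (j:ℝ) + 2 + y - ((j:ℝ) + 1 + y) = 1 by ring, one_div]
  have : (fun n : ℕ => ∑ j ∈ Finset.range n, (((j:ℝ) + 1 + y) * ((j:ℝ) + 2 + y))⁻¹)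
      = fun n : ℕ => (1 + y)⁻¹ - ((n:ℝ) + 1 + y)⁻¹ := by
    funext n
    calc ∑ j ∈ Finset.range n, (((j:ℝ) + 1 + y) * ((j:ℝ) + 2 + y))⁻¹
        = ∑ j ∈ Finset.range n,
            ((fun k : ℕ => ((k:ℝ) + 1 + y)⁻¹) j - (fun k : ℕ => ((k:ℝ) + 1 + y)⁻¹) (j+1)) := by
          apply Finset.sum_congr rfl
          intro j _
          simpa using hterm j
      _ = (fun k : ℕ => ((k:ℝ) + 1 + y)⁻¹) 0 - (fun k : ℕ => ((k:ℝ) + 1 + y)⁻¹) n := by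
          rw [Finset.sum_range_sub']
      _ = (1 + y)⁻¹ - ((n:ℝ) + 1 + y)⁻¹ := by norm_num
  rw [this]
  have h0 : Tendsto (fun n : ℕ => ((n:ℝ) + 1 + y)⁻¹) atTop (nhds 0) := by
    apply Tendsto.inv_tendsto_atTop
    apply tendsto_atTop_add_const_right
    exact tendsto_natCast_atTop_atTop.atTop_add (tendsto_const_nhds.mono_left le_top) |>.congr (fun n => rfl)
  simpa using (tendsto_const_nhds (x := (1+y)⁻¹)).sub h0

section
variable (p : ℕ) (y : ℝ)

noncomputable def phiR (j : ℕ) : ℝ := if j + 1 = p then Real.exp (-1) else 1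

lemma phiR_nonneg (j : ℕ) : 0 ≤ phiR p j := by
  unfold phiR; split <;> positivity

lemma phiR_le_one (j : ℕ) : phiR p j ≤ 1 := by
  unfold phiR; split
  · exact le_of_lt exp_neg_one_lt_one
  · exact le_refl _

end

lemma phi_u_eq (p : ℕ) (hp : 2 ≤ p) (y : ℝ) (j : ℕ) :
    phiR p j * (((j:ℝ) + 1 + y) * ((j:ℝ) + 2 + y))⁻¹
      = (((j:ℝ) + 1 + y) * ((j:ℝ) + 2 + y))⁻¹
        - (if j = p - 1 then (1 - Real.exp (-1)) * ((((p:ℝ) - 1) + 1 + y) * (((p:ℝ) - 1) + 2 + y))⁻¹ else 0) := by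
  unfold phiR
  rcases eq_or_ne j (p - 1) with h | h
  · subst h
    have hcast : (((p - 1 : ℕ)):ℝ) = (p:ℝ) - 1 := by
      have : 1 ≤ p := le_trans (by norm_num) hp
      push_cast [this]
      ring
    rw [if_pos rfl, if_pos (by omega), hcast]
    ring
  · rw [if_neg (by omega), if_neg h]
    ring

lemma summable_u {y : ℝ} (hy0 : 0 < y) :
    Summable (fun j : ℕ => ((((j:ℝ) + 1 + y) * ((j:ℝ) + 2 + y))⁻¹)) :=
  (hasSum_u y hy0).summable

lemma summable_phi_u (p : ℕ) (hp : 2 ≤ p) {y : ℝ} (hy0 : 0 < y) :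
    Summable (fun j : ℕ => phiR p j * (((j:ℝ) + 1 + y) * ((j:ℝ) + 2 + y))⁻¹) := by
  have h1 := summable_u hy0
  have h2 : Summable (fun j : ℕ =>
      (if j = p - 1 then (1 - Real.exp (-1)) * ((((p:ℝ) - 1) + 1 + y) * (((p:ℝ) - 1) + 2 + y))⁻¹ else 0)) :=
    summable_of_ne_finset_zero (s := {p - 1}) (fun j hj => if_neg (by simpa using hj))
  have := h1.sub h2
  apply this.congr
  intro j
  rw [← phi_u_eq p hp y j]

lemma tsum_phi_u_le (p : ℕ) (hp : 2 ≤ p) {y : ℝ} (hy : y ∈ Set.Ioo (0:ℝ) 1) :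
    ∑' j : ℕ, phiR p j * (((j:ℝ) + 1 + y) * ((j:ℝ) + 2 + y))⁻¹ ≤ rho p * (1 + y)⁻¹ := by
  obtain ⟨hy0, hy1⟩ := hy
  have hpR : (2:ℝ) ≤ (p:ℝ) := by exact_mod_cast hp
  have h1 := summable_u hy0
  have h2 : Summable (fun j : ℕ =>
      (if j = p - 1 then (1 - Real.exp (-1)) * ((((p:ℝ) - 1) + 1 + y) * (((p:ℝ) - 1) + 2 + y))⁻¹ else 0)) :=
    summable_of_ne_finset_zero (s := {p - 1}) (fun j hj => if_neg (by simpa using hj))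
  have heq : ∑' j : ℕ, phiR p j * (((j:ℝ) + 1 + y) * ((j:ℝ) + 2 + y))⁻¹
      = (1 + y)⁻¹ - (1 - Real.exp (-1)) * ((((p:ℝ) - 1) + 1 + y) * (((p:ℝ) - 1) + 2 + y))⁻¹ := by
    have := Summable.tsum_sub h1 h2
    calc ∑' j : ℕ, phiR p j * (((j:ℝ) + 1 + y) * ((j:ℝ) + 2 + y))⁻¹
        = ∑' j : ℕ, ((((j:ℝ) + 1 + y) * ((j:ℝ) + 2 + y))⁻¹
          - (if j = p - 1 then (1 - Real.exp (-1)) * ((((p:ℝ) - 1) + 1 + y) * (((p:ℝ) - 1) + 2 + y))⁻¹ else 0)) := by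
          exact tsum_congr (fun j => phi_u_eq p hp y j)
      _ = (1 + y)⁻¹ - (1 - Real.exp (-1)) * ((((p:ℝ) - 1) + 1 + y) * (((p:ℝ) - 1) + 2 + y))⁻¹ := by
          rw [this, (hasSum_u y hy0).tsum_eq, tsum_ite_eq]
  rw [heq]
  -- now the elementary inequality
  set δ := 1 - Real.exp (-1) with hδ
  have hδ0 : 0 < δ := by rw [hδ]; linarith [exp_neg_one_lt_one]
  have hA : (0:ℝ) < ((p:ℝ) - 1 + 1 + y) * ((p:ℝ) - 1 + 2 + y) := by nlinarith [hpR, hy0]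
  have hB : (0:ℝ) < (1 + y) * (((p:ℝ) + 1) * ((p:ℝ) + 2)) := by positivity
  have key : ((p:ℝ) - 1 + 1 + y) * ((p:ℝ) - 1 + 2 + y) ≤ (1 + y) * (((p:ℝ) + 1) * ((p:ℝ) + 2)) := by
    have e1 : (p:ℝ) - 1 + 1 + y ≤ (p:ℝ) + 1 := by linarith
    have e2 : (p:ℝ) - 1 + 2 + y ≤ (p:ℝ) + 2 := by linarith
    have e3 : ((p:ℝ) - 1 + 1 + y) * ((p:ℝ) - 1 + 2 + y) ≤ ((p:ℝ) + 1) * ((p:ℝ) + 2) :=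
      mul_le_mul e1 e2 (by nlinarith) (by nlinarith)
    nlinarith
  have hinv : ((1 + y) * (((p:ℝ) + 1) * ((p:ℝ) + 2)))⁻¹ ≤ (((p:ℝ) - 1 + 1 + y) * ((p:ℝ) - 1 + 2 + y))⁻¹ :=
    inv_anti₀ hA key
  have hmul := mul_le_mul_of_nonneg_left hinv (le_of_lt hδ0)
  have hexpand : rho p * (1 + y)⁻¹
      = (1 + y)⁻¹ - δ * ((1 + y) * (((p:ℝ) + 1) * ((p:ℝ) + 2)))⁻¹ := by
    unfold rho
    rw [mul_inv, div_eq_mul_inv, ← hδ]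
    ring
  rw [hexpand]
  linarith

noncomputable def wD (x : ℝ) : ℝ≥0∞ := ENNReal.ofReal ((1 + x)⁻¹)

lemma measurable_wD : Measurable wD :=
  ENNReal.measurable_ofReal.comp ((measurable_const.add measurable_id).inv)

lemma mem_branch_digit (j : ℕ) {x : ℝ}
    (hx : x ∈ Set.Ioo (((j:ℝ) + 2)⁻¹) (((j:ℝ) + 1)⁻¹)) : cfDigit x = j + 1 := by
  rw [← image_branch] at hx
  obtain ⟨y, hy, rfl⟩ := hx
  exact (digit_branch j hy).1

lemma tsum_bound_ennreal (p : ℕ) (hp : 2 ≤ p) {y : ℝ} (hy : y ∈ Set.Ioo (0:ℝ) 1) :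
    ∑' j : ℕ, (if j + 1 = p then ENNReal.ofReal (Real.exp (-1)) else 1)
        * ENNReal.ofReal ((((j:ℝ) + 1 + y) * ((j:ℝ) + 2 + y))⁻¹)
      ≤ ENNReal.ofReal (rho p) * ENNReal.ofReal ((1 + y)⁻¹) := by
  have hterm : ∀ j : ℕ, (if j + 1 = p then ENNReal.ofReal (Real.exp (-1)) else 1)
        * ENNReal.ofReal ((((j:ℝ) + 1 + y) * ((j:ℝ) + 2 + y))⁻¹)
      = ENNReal.ofReal (phiR p j * (((j:ℝ) + 1 + y) * ((j:ℝ) + 2 + y))⁻¹) := by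
    intro j
    rw [ENNReal.ofReal_mul (phiR_nonneg p j)]
    congr 1
    unfold phiR
    split <;> simp
  calc ∑' j : ℕ, (if j + 1 = p then ENNReal.ofReal (Real.exp (-1)) else 1)
        * ENNReal.ofReal ((((j:ℝ) + 1 + y) * ((j:ℝ) + 2 + y))⁻¹)
      = ∑' j : ℕ, ENNReal.ofReal (phiR p j * (((j:ℝ) + 1 + y) * ((j:ℝ) + 2 + y))⁻¹) :=
        tsum_congr hterm
    _ = ENNReal.ofReal (∑' j : ℕ, phiR p j * (((j:ℝ) + 1 + y) * ((j:ℝ) + 2 + y))⁻¹) :=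
        (ENNReal.ofReal_tsum_of_nonneg
          (fun j => mul_nonneg (phiR_nonneg p j) (inv_nonneg.2 (by
            have h1 := hy.1
            have h2 := Nat.cast_nonneg (α := ℝ) j
            nlinarith)))
          (summable_phi_u p hp hy.1)).symm
    _ ≤ ENNReal.ofReal (rho p * (1 + y)⁻¹) :=
        ENNReal.ofReal_le_ofReal (tsum_phi_u_le p hp hy)
    _ = ENNReal.ofReal (rho p) * ENNReal.ofReal ((1 + y)⁻¹) :=
        ENNReal.ofReal_mul (le_of_lt (rho_pos p))

lemma step (p : ℕ) (hp : 2 ≤ p) (G : ℝ → ℝ≥0∞) (hG : Measurable G) :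
    ∫⁻ x in Set.Ioc (0:ℝ) 1,
        (if cfDigit x = p then ENNReal.ofReal (Real.exp (-1)) else 1) * G (gaussMap x) * wD x
      ≤ ENNReal.ofReal (rho p) * ∫⁻ y in Set.Ioc (0:ℝ) 1, G y * wD y := by
  set F : ℝ → ℝ≥0∞ := fun x =>
    (if cfDigit x = p then ENNReal.ofReal (Real.exp (-1)) else 1) * G (gaussMap x) * wD x with hF
  have hFmeas : Measurable F := by
    apply Measurable.mul
    apply Measurable.mul
    · exact Measurable.ite (measurable_cfDigit (MeasurableSet.singleton p))
        measurable_const measurable_const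
    · exact hG.comp measurable_gaussMap
    · exact measurable_wD
  set s : ℕ → Set ℝ := fun j => Set.Ioo (((j:ℝ) + 2)⁻¹) (((j:ℝ) + 1)⁻¹) with hs
  have hsub : ∀ j, s j ⊆ Set.Ioc (0:ℝ) 1 := by
    intro j x hx
    obtain ⟨h1, h2⟩ := hx
    constructor
    · exact lt_trans (by positivity) h1
    · calc x ≤ (((j:ℝ) + 1))⁻¹ := le_of_lt h2
        _ ≤ 1 := by
          rw [inv_le_one_iff₀]
          right; push_cast; linarith [Nat.cast_nonneg (α := ℝ) j]
  have hae : (Set.Ioc (0:ℝ) 1 : Set ℝ) =ᵐ[volume] ⋃ j, s j := by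
    rw [MeasureTheory.ae_eq_set]
    constructor
    · apply measure_mono_null ?_
        ((Set.countable_range (fun n : ℕ => ((n:ℝ))⁻¹)).measure_zero volume)
      rintro x ⟨hx, hnx⟩
      obtain ⟨hx0, hx1⟩ := hx
      by_contra hne
      have hxinv0 : (0:ℝ) < x⁻¹ := inv_pos.2 hx0
      have hxinv1 : 1 ≤ x⁻¹ := by
        rw [show (1:ℝ) = 1⁻¹ by norm_num]
        exact inv_anti₀ hx0 hx1
      set n := ⌊x⁻¹⌋₊ with hn
      have hn1 : 1 ≤ n := Nat.le_floor (by exact_mod_cast hxinv1)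
      have hnpos : (0:ℝ) < (n:ℝ) := by exact_mod_cast hn1
      have hfl : (n:ℝ) ≤ x⁻¹ := Nat.floor_le (le_of_lt hxinv0)
      have hfl2 : x⁻¹ < (n:ℝ) + 1 := Nat.lt_floor_add_one _
      have hxne : x ≠ (n:ℝ)⁻¹ := fun h => hne ⟨n, h.symm⟩
      have hxle : x ≤ (n:ℝ)⁻¹ := by
        rw [← inv_inv x]
        exact inv_anti₀ hnpos hfl
      have hxlt : x < (n:ℝ)⁻¹ := lt_of_le_of_ne hxle hxne
      have hxgt : ((n:ℝ) + 1)⁻¹ < x := by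
        rw [← inv_inv x]
        exact inv_strictAnti₀ hxinv0 hfl2
      apply hnx
      refine Set.mem_iUnion.2 ⟨n - 1, ?_⟩
      have hcast : ((n - 1 : ℕ) : ℝ) = (n:ℝ) - 1 := by
        push_cast [hn1]; ring
      constructor
      · rw [hcast, show (n:ℝ) - 1 + 2 = (n:ℝ) + 1 by ring]; exact hxgt
      · rw [hcast, show (n:ℝ) - 1 + 1 = (n:ℝ) by ring]; exact hxlt
    · have : (⋃ j, s j) \ Set.Ioc (0:ℝ) 1 = ∅ := by
        rw [Set.diff_eq_empty]
        exact Set.iUnion_subset hsub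
      rw [this]; exact measure_empty
  have hdisj : Pairwise (Function.onFun Disjoint s) := by
    intro i j hij
    rw [Function.onFun, Set.disjoint_left]
    intro x hxi hxj
    have h1 := mem_branch_digit i hxi
    have h2 := mem_branch_digit j hxj
    omega
  have hsmeas : ∀ j, MeasurableSet (s j) := fun j => measurableSet_Ioo
  have hpiece : ∀ j : ℕ, ∫⁻ x in s j, F x
      = ∫⁻ y in Set.Ioo (0:ℝ) 1,
        (if j + 1 = p then ENNReal.ofReal (Real.exp (-1)) else 1) * G y
          * ENNReal.ofReal ((((j:ℝ) + 1 + y) * ((j:ℝ) + 2 + y))⁻¹) := by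
    intro j
    have hchg := lintegral_image_eq_lintegral_abs_deriv_mul'
      (f := fun y : ℝ => ((j:ℝ) + 1 + y)⁻¹)
      (f' := fun y : ℝ => -((((j:ℝ) + 1 + y)^2)⁻¹))
      (measurableSet_Ioo (a := (0:ℝ)) (b := 1))
      (fun y hy => by
        have hne : (j:ℝ) + 1 + y ≠ 0 := by
          have := hy.1; positivity
        have h1 : HasDerivAt (fun y : ℝ => ((j:ℝ) + 1 + y)) 1 y := by
          simpa using (hasDerivAt_id y).const_add ((j:ℝ) + 1)
        have h2 := h1.inv hne
        have h3 : HasDerivWithinAt (fun y : ℝ => ((j:ℝ) + 1 + y)⁻¹)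
            (-1 / ((j:ℝ) + 1 + y) ^ 2) (Set.Ioo 0 1) y := by
          exact h2.hasDerivWithinAt
        convert h3 using 1
        ring)
      (fun a _ b _ hab => by
        have := inv_injective hab
        linarith [this])
      F
    rw [image_branch] at hchg
    refine Eq.trans hchg ?_
    apply setLIntegral_congr_fun measurableSet_Ioo
    intro y hy
    obtain ⟨hd1, hd2⟩ := digit_branch j hy
    have hy0 := hy.1
    have hc : (0:ℝ) < (j:ℝ) + 1 + y := by positivity
    rw [hF]
    simp only []
    rw [hd1, hd2]
    have habs : |-(((((j:ℝ) + 1 + y))^2)⁻¹)| = ((((j:ℝ) + 1 + y))^2)⁻¹ := by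
      rw [abs_neg, abs_of_pos (by positivity)]
    rw [habs]
    rw [show wD (((j:ℝ) + 1 + y)⁻¹) = ENNReal.ofReal ((1 + ((j:ℝ) + 1 + y)⁻¹)⁻¹) from rfl]
    rw [show ∀ A B C D : ℝ≥0∞, A * (B * C * D) = B * C * (A * D) from fun A B C D => by ring]
    congr 1
    rw [← ENNReal.ofReal_mul (by positivity)]
    congr 1
    have h2 : (1:ℝ) + ((j:ℝ) + 1 + y)⁻¹ ≠ 0 := by positivity
    field_simp
    ring
  calc ∫⁻ x in Set.Ioc (0:ℝ) 1, F x
      = ∫⁻ x in ⋃ j, s j, F x := setLIntegral_congr hae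
    _ = ∑' j : ℕ, ∫⁻ x in s j, F x := lintegral_iUnion hsmeas hdisj F
    _ = ∑' j : ℕ, ∫⁻ y in Set.Ioo (0:ℝ) 1,
          (if j + 1 = p then ENNReal.ofReal (Real.exp (-1)) else 1) * G y
            * ENNReal.ofReal ((((j:ℝ) + 1 + y) * ((j:ℝ) + 2 + y))⁻¹) := tsum_congr hpiece
    _ = ∫⁻ y in Set.Ioo (0:ℝ) 1, ∑' j : ℕ,
          (if j + 1 = p then ENNReal.ofReal (Real.exp (-1)) else 1) * G y
            * ENNReal.ofReal ((((j:ℝ) + 1 + y) * ((j:ℝ) + 2 + y))⁻¹) := by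
        rw [← lintegral_tsum]
        intro j
        apply Measurable.aemeasurable
        apply Measurable.mul
        · exact (measurable_const.mul hG)
        · exact ENNReal.measurable_ofReal.comp (by fun_prop)
    _ ≤ ∫⁻ y in Set.Ioo (0:ℝ) 1, ENNReal.ofReal (rho p) * (G y * wD y) := by
        apply setLIntegral_mono (measurable_const.mul (hG.mul measurable_wD))
        intro y hy
        calc ∑' j : ℕ, (if j + 1 = p then ENNReal.ofReal (Real.exp (-1)) else 1) * G y
              * ENNReal.ofReal ((((j:ℝ) + 1 + y) * ((j:ℝ) + 2 + y))⁻¹)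
            = G y * ∑' j : ℕ, (if j + 1 = p then ENNReal.ofReal (Real.exp (-1)) else 1)
              * ENNReal.ofReal ((((j:ℝ) + 1 + y) * ((j:ℝ) + 2 + y))⁻¹) := by
              rw [← ENNReal.tsum_mul_left]
              exact tsum_congr (fun j => by ring)
          _ ≤ G y * (ENNReal.ofReal (rho p) * ENNReal.ofReal ((1 + y)⁻¹)) :=
              mul_le_mul_right (tsum_bound_ennreal p hp hy) _
          _ = ENNReal.ofReal (rho p) * (G y * wD y) := by simp only [wD]; ring
    _ = ENNReal.ofReal (rho p) * ∫⁻ y in Set.Ioo (0:ℝ) 1, G y * wD y :=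
        lintegral_const_mul _ (hG.mul measurable_wD)
    _ ≤ ENNReal.ofReal (rho p) * ∫⁻ y in Set.Ioc (0:ℝ) 1, G y * wD y := by
        apply mul_le_mul_right
        exact lintegral_mono_set Set.Ioo_subset_Ioc_self

/-- number of occurrences of digit `p` among the first `n` digits -/
noncomputable def dCount (p n : ℕ) (x : ℝ) : ℕ :=
  ∑ k ∈ Finset.range n, if cfDigit (gaussMap^[k] x) = p then 1 else 0

lemma measurable_dCount (p n : ℕ) : Measurable (fun x => (dCount p n x : ℝ)) := by
  unfold dCount
  push_cast
  apply Finset.measurable_sum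
  intro k _
  have h1 : MeasurableSet {x : ℝ | cfDigit (gaussMap^[k] x) = p} :=
    (measurable_cfDigit.comp (measurable_gaussMap.iterate k)) (MeasurableSet.singleton p)
  exact Measurable.ite h1 measurable_const measurable_const

lemma dCount_succ (p n : ℕ) (x : ℝ) :
    dCount p (n+1) x = (if cfDigit x = p then 1 else 0) + dCount p n (gaussMap x) := by
  unfold dCount
  rw [Finset.sum_range_succ']
  simp only [Function.iterate_succ_apply, Function.iterate_zero_apply]
  exact add_comm _ _

noncomputable def expS (p n : ℕ) (x : ℝ) : ℝ≥0∞ := ENNReal.ofReal (Real.exp (-(dCount p n x : ℝ)))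

lemma measurable_expS (p n : ℕ) : Measurable (expS p n) := by
  apply ENNReal.measurable_ofReal.comp
  exact (Real.measurable_exp.comp (measurable_dCount p n).neg)

lemma expS_succ (p n : ℕ) (x : ℝ) :
    expS p (n+1) x = (if cfDigit x = p then ENNReal.ofReal (Real.exp (-1)) else 1)
      * expS p n (gaussMap x) := by
  unfold expS
  rw [dCount_succ]
  push_cast
  rw [neg_add, Real.exp_add, ENNReal.ofReal_mul (le_of_lt (Real.exp_pos _))]
  congr 1
  split <;> simp

noncomputable def JInt (p n : ℕ) : ℝ≥0∞ := ∫⁻ x in Set.Ioc (0:ℝ) 1, expS p n x * wD x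

lemma JInt_zero (p : ℕ) : JInt p 0 ≤ 1 := by
  unfold JInt expS dCount
  simp only [Finset.range_zero, Finset.sum_empty, Nat.cast_zero, neg_zero, Real.exp_zero,
    ENNReal.ofReal_one, one_mul]
  calc ∫⁻ x in Set.Ioc (0:ℝ) 1, wD x ≤ ∫⁻ _ in Set.Ioc (0:ℝ) 1, 1 := by
        apply setLIntegral_mono measurable_const
        intro x hx
        unfold wD
        rw [show (1:ℝ≥0∞) = ENNReal.ofReal 1 by simp]
        apply ENNReal.ofReal_le_ofReal
        rw [inv_le_one_iff₀]
        right; linarith [hx.1]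
    _ = 1 := by simp [Real.volume_Ioc]

lemma JInt_le (p : ℕ) (hp : 2 ≤ p) (n : ℕ) : JInt p n ≤ ENNReal.ofReal (rho p) ^ n := by
  induction n with
  | zero => simpa using JInt_zero p
  | succ n ih =>
    have hstep := step p hp (expS p n) (measurable_expS p n)
    have hcong : ∫⁻ x in Set.Ioc (0:ℝ) 1,
        (if cfDigit x = p then ENNReal.ofReal (Real.exp (-1)) else 1) * expS p n (gaussMap x) * wD x
        = JInt p (n+1) := by
      unfold JInt
      apply lintegral_congr
      intro x
      rw [expS_succ]
    rw [hcong] at hstep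
    calc JInt p (n+1) ≤ ENNReal.ofReal (rho p) * JInt p n := hstep
      _ ≤ ENNReal.ofReal (rho p) * ENNReal.ofReal (rho p) ^ n := mul_le_mul_right ih _
      _ = ENNReal.ofReal (rho p) ^ (n+1) := (pow_succ' _ _).symm

/-- the threshold for prime p -/
noncomputable def aP (p : ℕ) : ℝ := (1 - Real.exp (-1)) / (2 * (((p:ℝ) + 1) * ((p:ℝ) + 2)))


lemma aP_pos (p : ℕ) : 0 < aP p := by
  unfold aP
  apply div_pos (by linarith [exp_neg_one_lt_one]) (by positivity)

lemma rho_eq (p : ℕ) : rho p = 1 - 2 * aP p := by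
  unfold rho aP
  field_simp

lemma exp_aP_rho_le (p : ℕ) : Real.exp (aP p) * rho p ≤ Real.exp (-(aP p)) := by
  have h1 : rho p ≤ Real.exp (-(2 * aP p)) := by
    rw [rho_eq]
    linarith [Real.add_one_le_exp (-(2 * aP p))]
  calc Real.exp (aP p) * rho p ≤ Real.exp (aP p) * Real.exp (-(2 * aP p)) := by
        apply mul_le_mul_of_nonneg_left h1 (le_of_lt (Real.exp_pos _))
    _ = Real.exp (-(aP p)) := by rw [← Real.exp_add]; ring_nf

/-- bad set -/
def badSet (p n : ℕ) : Set ℝ := {x | x ∈ Set.Ioc (0:ℝ) 1 ∧ (dCount p n x : ℝ) ≤ aP p * n}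

lemma measurableSet_badSet (p n : ℕ) : MeasurableSet (badSet p n) := by
  apply MeasurableSet.inter
  · exact measurableSet_Ioc
  · exact measurableSet_le (measurable_dCount p n) measurable_const

lemma badSet_measure_le (p : ℕ) (hp : 2 ≤ p) (n : ℕ) :
    volume (badSet p n) ≤ 2 * ENNReal.ofReal (Real.exp (-(aP p)))^n := by
  have key : ∀ x ∈ badSet p n,
      (1:ℝ≥0∞) ≤ ENNReal.ofReal (Real.exp (aP p * n)) * (expS p n x * (2 * wD x)) := by
    intro x ⟨hx, hle⟩
    have h2w : (1:ℝ≥0∞) ≤ 2 * wD x := by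
      unfold wD
      rw [show (2:ℝ≥0∞) = ENNReal.ofReal 2 by simp, ← ENNReal.ofReal_mul (by norm_num),
        show (1:ℝ≥0∞) = ENNReal.ofReal 1 by simp]
      apply ENNReal.ofReal_le_ofReal
      have hpos : (0:ℝ) < 1 + x := by linarith [hx.1]
      have h2 : (2:ℝ)⁻¹ ≤ (1+x)⁻¹ := inv_anti₀ hpos (by linarith [hx.2])
      nlinarith [h2]
    have hexp : (1:ℝ) ≤ Real.exp (aP p * n) * Real.exp (-(dCount p n x : ℝ)) := by
      rw [← Real.exp_add]
      rw [show (1:ℝ) = Real.exp 0 by simp]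
      apply Real.exp_le_exp.2
      linarith
    calc (1:ℝ≥0∞) = ENNReal.ofReal 1 := by simp
      _ ≤ ENNReal.ofReal (Real.exp (aP p * n) * Real.exp (-(dCount p n x : ℝ))) :=
          ENNReal.ofReal_le_ofReal hexp
      _ = ENNReal.ofReal (Real.exp (aP p * n)) * expS p n x := by
          rw [ENNReal.ofReal_mul (le_of_lt (Real.exp_pos _))]; rfl
      _ ≤ ENNReal.ofReal (Real.exp (aP p * n)) * (expS p n x * (2 * wD x)) := by
          apply mul_le_mul_right
          calc expS p n x = expS p n x * 1 := (mul_one _).symm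
            _ ≤ expS p n x * (2 * wD x) := mul_le_mul_right h2w _
  calc volume (badSet p n) = ∫⁻ _ in badSet p n, 1 := by
        rw [setLIntegral_one]
    _ ≤ ∫⁻ x in badSet p n, ENNReal.ofReal (Real.exp (aP p * n)) * (expS p n x * (2 * wD x)) := by
        apply setLIntegral_mono
        · exact (measurable_const.mul ((measurable_expS p n).mul (measurable_const.mul measurable_wD)))
        · exact key
    _ ≤ ∫⁻ x in Set.Ioc (0:ℝ) 1, ENNReal.ofReal (Real.exp (aP p * n)) * (expS p n x * (2 * wD x)) := by
        apply lintegral_mono_set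
        intro x hx; exact hx.1
    _ = ENNReal.ofReal (Real.exp (aP p * n)) * ∫⁻ x in Set.Ioc (0:ℝ) 1, expS p n x * (2 * wD x) :=
        lintegral_const_mul _ ((measurable_expS p n).mul (measurable_const.mul measurable_wD))
    _ = ENNReal.ofReal (Real.exp (aP p * n)) * (2 * JInt p n) := by
        congr 1
        unfold JInt
        rw [← lintegral_const_mul 2 (f := fun x => expS p n x * wD x) ((measurable_expS p n).mul measurable_wD)]
        apply lintegral_congr
        intro x
        ring
    _ ≤ ENNReal.ofReal (Real.exp (aP p * n)) * (2 * ENNReal.ofReal (rho p) ^ n) :=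
        mul_le_mul_right (mul_le_mul_right (JInt_le p hp n) _) _
    _ = 2 * (ENNReal.ofReal (Real.exp (aP p * n)) * ENNReal.ofReal (rho p) ^ n) := by ring
    _ ≤ 2 * ENNReal.ofReal (Real.exp (-(aP p)))^n := by
        apply mul_le_mul_right
        calc ENNReal.ofReal (Real.exp (aP p * n)) * ENNReal.ofReal (rho p) ^ n
            = ENNReal.ofReal (Real.exp (aP p))^n * ENNReal.ofReal (rho p) ^ n := by
              rw [← ENNReal.ofReal_pow (le_of_lt (Real.exp_pos _)), ← Real.exp_nat_mul]
              ring_nf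
          _ = (ENNReal.ofReal (Real.exp (aP p)) * ENNReal.ofReal (rho p)) ^ n := (mul_pow _ _ _).symm
          _ ≤ ENNReal.ofReal (Real.exp (-(aP p)))^n := by
              apply pow_le_pow_left' 
              rw [← ENNReal.ofReal_mul (le_of_lt (Real.exp_pos _))]
              exact ENNReal.ofReal_le_ofReal (exp_aP_rho_le p)

/-- a.e. eventual growth of digit counts -/
lemma ae_eventually_dCount (p : ℕ) (hp : 2 ≤ p) :
    ∀ᵐ x ∂(volume.restrict (Set.Ioc (0:ℝ) 1)),
      ∀ᶠ n in atTop, aP p * n < (dCount p n x : ℝ) := by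
  have hsum : (∑' n, (volume.restrict (Set.Ioc (0:ℝ) 1)) (badSet p n)) ≠ ∞ := by
    apply LT.lt.ne
    have hr : ENNReal.ofReal (Real.exp (-(aP p))) < 1 := by
      rw [show (1:ℝ≥0∞) = ENNReal.ofReal 1 by simp]
      apply (ENNReal.ofReal_lt_ofReal_iff (by norm_num)).2
      apply Real.exp_lt_one_iff.2
      linarith [aP_pos p]
    have hb : ∀ n, (volume.restrict (Set.Ioc (0:ℝ) 1)) (badSet p n)
        ≤ 2 * ENNReal.ofReal (Real.exp (-(aP p)))^n := by
      intro n
      calc (volume.restrict (Set.Ioc (0:ℝ) 1)) (badSet p n) ≤ volume (badSet p n) :=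
            Measure.restrict_apply_le _ _
        _ ≤ _ := badSet_measure_le p hp n
    calc ∑' n, (volume.restrict (Set.Ioc (0:ℝ) 1)) (badSet p n)
        ≤ ∑' n, 2 * ENNReal.ofReal (Real.exp (-(aP p)))^n := ENNReal.tsum_le_tsum hb
      _ = 2 * (1 - ENNReal.ofReal (Real.exp (-(aP p))))⁻¹ := by
          rw [ENNReal.tsum_mul_left, ENNReal.tsum_geometric]
      _ < ∞ := by
          apply ENNReal.mul_lt_top (by norm_num)
          exact ENNReal.inv_lt_top.2 (tsub_pos_iff_lt.2 hr)
  have := MeasureTheory.ae_eventually_notMem hsum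
  filter_upwards [this, ae_restrict_mem measurableSet_Ioc] with x hx hmem
  filter_upwards [hx] with n hn
  by_contra hcon
  push_neg at hcon
  exact hn ⟨hmem, hcon⟩

lemma q_mul_aP_ge (q : ℕ) (hq : 2 ≤ q) : 1/(16 * (q:ℝ)) ≤ (q:ℝ) * aP q := by
  have hqR : (2:ℝ) ≤ (q:ℝ) := by exact_mod_cast hq
  unfold aP
  rw [← mul_div_assoc, div_le_div_iff₀ (by positivity) (by positivity)]
  have h1 : (1:ℝ)/2 ≤ 1 - Real.exp (-1) := by linarith [exp_neg_one_le_half]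
  have h2 : ((q:ℝ) + 1) * ((q:ℝ) + 2) ≤ 4 * (q:ℝ)^2 := by nlinarith
  nlinarith

lemma exists_prime_sum_large (C : ℝ) :
    ∃ M : ℕ, C ≤ ∑ q ∈ (Finset.range M).filter Nat.Prime, 1/(16 * (q:ℝ)) := by
  have hnot := not_summable_one_div_on_primes
  have hnonneg : ∀ n : ℕ, 0 ≤ Set.indicator {p : ℕ | p.Prime} (fun n : ℕ => (1:ℝ)/n) n :=
    fun n => Set.indicator_nonneg (fun i _ => by positivity) n
  have htend := (not_summable_iff_tendsto_nat_atTop_of_nonneg hnonneg).1 hnot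
  obtain ⟨M, hM⟩ := (htend.eventually_ge_atTop (16 * C)).exists
  refine ⟨M, ?_⟩
  have heq : ∑ i ∈ Finset.range M, Set.indicator {p : ℕ | p.Prime} (fun n : ℕ => (1:ℝ)/n) i
      = ∑ q ∈ (Finset.range M).filter Nat.Prime, (1:ℝ)/q := by
    rw [Finset.sum_filter]
    apply Finset.sum_congr rfl
    intro i _
    rw [Set.indicator_apply]
    simp [Set.mem_setOf_eq]
  rw [heq] at hM
  have : ∑ q ∈ (Finset.range M).filter Nat.Prime, 1/(16 * (q:ℝ))
      = (1/16) * ∑ q ∈ (Finset.range M).filter Nat.Prime, (1:ℝ)/q := by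
    rw [Finset.mul_sum]
    apply Finset.sum_congr rfl
    intro q _
    field_simp
  rw [this]
  linarith
lemma pointwise_lb (P : Finset ℕ) (hP : ∀ q ∈ P, Nat.Prime q) (y : ℝ) :
    ∑ q ∈ P, (q:ℝ) * (if cfDigit y = q then (1:ℝ) else 0) ≤ (primeDigitVal y : ℝ) := by
  have : ∑ q ∈ P, (q:ℝ) * (if cfDigit y = q then (1:ℝ) else 0)
      = ∑ q ∈ P, (if cfDigit y = q then (q:ℝ) else 0) := by
    apply Finset.sum_congr rfl
    intro q _
    rw [mul_ite, mul_one, mul_zero]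
  rw [this, Finset.sum_ite_eq]
  split
  · next h =>
    unfold primeDigitVal
    rw [if_pos (hP _ h)]
  · positivity

theorem main_aux :
    ∀ᵐ x ∂(volume.restrict (Set.Ioc (0:ℝ) 1)),
      Tendsto (fun n : ℕ =>
          (∑ k ∈ Finset.range n, (primeDigitVal (gaussMap^[k] x) : ℝ)) / n)
        atTop atTop := by
  have hae : ∀ᵐ x ∂(volume.restrict (Set.Ioc (0:ℝ) 1)),
      ∀ p : ℕ, p.Prime → ∀ᶠ n in atTop, aP p * n < (dCount p n x : ℝ) := by
    rw [ae_all_iff]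
    intro p
    by_cases hp : p.Prime
    · filter_upwards [ae_eventually_dCount p hp.two_le] with x hx
      intro _
      exact hx
    · exact ae_of_all _ (fun x h => absurd h hp)
  filter_upwards [hae] with x hx
  rw [tendsto_atTop]
  intro b
  obtain ⟨M, hM⟩ := exists_prime_sum_large b
  set P := (Finset.range M).filter Nat.Prime with hPdef
  have hPprime : ∀ q ∈ P, Nat.Prime q := fun q hq => (Finset.mem_filter.1 hq).2
  have hev : ∀ᶠ n in atTop, (∀ q ∈ P, aP q * n < (dCount q n x : ℝ)) ∧ 1 ≤ n := by
    apply Filter.Eventually.and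
    · rw [Filter.eventually_all_finset]
      intro q hq
      exact hx q (hPprime q hq)
    · exact eventually_ge_atTop 1
  filter_upwards [hev] with n ⟨hn, hn1⟩
  have hnR : (0:ℝ) < n := by exact_mod_cast hn1
  -- step 1: pointwise bound on the sum
  have hsum1 : ∑ q ∈ P, (q:ℝ) * (dCount q n x : ℝ)
      ≤ ∑ k ∈ Finset.range n, (primeDigitVal (gaussMap^[k] x) : ℝ) := by
    have : ∀ q ∈ P, (q:ℝ) * (dCount q n x : ℝ)
        = ∑ k ∈ Finset.range n, (q:ℝ) * (if cfDigit (gaussMap^[k] x) = q then (1:ℝ) else 0) := by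
      intro q _
      unfold dCount
      push_cast
      rw [Finset.mul_sum]
    rw [Finset.sum_congr rfl this, Finset.sum_comm]
    apply Finset.sum_le_sum
    intro k _
    exact pointwise_lb P hPprime _
  -- step 2: divide by n
  calc b ≤ ∑ q ∈ P, 1/(16 * (q:ℝ)) := hM
    _ ≤ ∑ q ∈ P, (q:ℝ) * aP q := by
        apply Finset.sum_le_sum
        intro q hq
        exact q_mul_aP_ge q (hPprime q hq).two_le
    _ ≤ ∑ q ∈ P, (q:ℝ) * ((dCount q n x : ℝ) / n) := by
        apply Finset.sum_le_sum
        intro q hq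
        apply mul_le_mul_of_nonneg_left _ (Nat.cast_nonneg q)
        rw [le_div_iff₀ hnR]
        exact le_of_lt (hn q hq)
    _ = (∑ q ∈ P, (q:ℝ) * (dCount q n x : ℝ)) / n := by
        rw [Finset.sum_div]
        apply Finset.sum_congr rfl
        intro q _
        ring
    _ ≤ (∑ k ∈ Finset.range n, (primeDigitVal (gaussMap^[k] x) : ℝ)) / n := by
        exact (div_le_div_iff_of_pos_right hnR).2 hsum1

theorem stmt_11 :
    ∀ᵐ x ∂(volume.restrict (Set.Ioc (0:ℝ) 1)),
      Tendsto (fun n : ℕ =>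
          (∑ k ∈ Finset.range n, (primeDigitVal (gaussMap^[k] x) : ℝ)) / n)
        atTop atTop := by
  exact main_aux
end
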